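/- Let p be a probability measure on ℝ with mean 0, and for a > 0 define the measure q⁺ by dq⁺/dp(x) = 1 + min(1, max(−1, ax)). Then the difference of first moments satisfies ∫x dq⁺ − ∫x dp = ∫_{(−∞,−1/a]} (−x) dp + a·∫_{[−1/a,1/a]} x² dp + ∫_{[1/a,∞)} x dp, and this quantity is nonnegative, continuous, and nondecreasing in a. -/

import Mathlib

open MeasureTheory

/-- For a (atomless) probability measure `p` on ℝ with mean 0, the first-moment shift of
the tilted measure `q⁺` (density `1 + min 1 (max (-1) (a x))` w.r.t. `p`) equals
`∫_{(-∞,-1/a]} (-x) dp + a ∫_{[-1/a,1/a]} x² dp + ∫_{[1/a,∞)} x dp`; moreover this shift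
is nonnegative, continuous and nondecreasing as a function of `a > 0`. -/
theorem tilted_first_moment_shift (p : Measure ℝ) [IsProbabilityMeasure p]
    (hcont : ∀ x : ℝ, p {x} = 0)
    (hint : Integrable (fun x => x) p) (hmean : ∫ x, x ∂p = 0)
    (g : ℝ → ℝ)
    (hg : ∀ a : ℝ, g a =
      (∫ x in Set.Iic (-(1 / a)), (-x) ∂p)
        + a * (∫ x in Set.Icc (-(1 / a)) (1 / a), x ^ 2 ∂p)
        + ∫ x in Set.Ici (1 / a), x ∂p) :
    (∀ a : ℝ, 0 < a →
      (∫ x, x * (1 + min 1 (max (-1) (a * x))) ∂p) - (∫ x, x ∂p) = g a ∧ 0 ≤ g a) ∧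
    ContinuousOn g (Set.Ioi 0) ∧ MonotoneOn g (Set.Ioi 0) := by
  haveI : NullSingletonClass p := ⟨hcont⟩
  set f : ℝ → ℝ → ℝ := fun a x => x * min 1 (max (-1) (a * x)) with hf
  have hbd : ∀ a x, |f a x| ≤ |x| := by
    intro a x
    have h1 : |min 1 (max (-1) (a * x))| ≤ 1 := by
      rw [abs_le]
      exact ⟨le_min (by norm_num) (le_max_left _ _), min_le_left _ _⟩
    calc |f a x| = |x| * |min 1 (max (-1) (a * x))| := abs_mul _ _
      _ ≤ |x| * 1 := mul_le_mul_of_nonneg_left h1 (abs_nonneg _)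
      _ = |x| := mul_one _
  have hmeas : ∀ a, AEStronglyMeasurable (f a) p := by
    intro a
    apply Continuous.aestronglyMeasurable
    exact continuous_id.mul (continuous_const.min ((continuous_const).max
      (continuous_const.mul continuous_id)))
  have hInt : ∀ a, Integrable (f a) p := fun a =>
    (hint.abs).mono' (hmeas a) (Filter.Eventually.of_forall fun x => by
      simpa [Real.norm_eq_abs] using hbd a x)
  have hpos : ∀ a x, 0 < a → 0 ≤ f a x := by
    intro a x ha
    rcases le_or_gt 0 x with hx | hx
    · exact mul_nonneg hx (le_min zero_le_one (le_max_of_le_right (mul_nonneg ha.le hx)))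
    · have h0 : min 1 (max (-1) (a * x)) ≤ 0 := (min_le_right _ _).trans (max_le (by norm_num)
        (mul_nonpos_of_nonneg_of_nonpos ha.le hx.le))
      simp only [hf]
      nlinarith
  have hmono : ∀ a b x, a ≤ b → f a x ≤ f b x := by
    intro a b x hab
    rcases le_or_gt 0 x with hx | hx
    · have h := mul_le_mul_of_nonneg_right hab hx
      exact mul_le_mul_of_nonneg_left (min_le_min le_rfl (max_le_max le_rfl h)) hx
    · have h := mul_le_mul_of_nonpos_right hab hx.le
      exact mul_le_mul_of_nonpos_left (min_le_min le_rfl (max_le_max le_rfl h)) hx.le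
  have key : ∀ a : ℝ, 0 < a → ∫ x, f a x ∂p = g a := by
    intro a ha
    have hc : 0 < 1 / a := by positivity
    have hsplit1 : (∫ x in Set.Iic (-(1/a)), f a x ∂p) + (∫ x in Set.Ioi (-(1/a)), f a x ∂p)
        = ∫ x, f a x ∂p :=
      intervalIntegral.integral_Iic_add_Ioi ((hInt a).integrableOn) ((hInt a).integrableOn)
    have hsplit2 : (∫ x in Set.Ioc (-(1/a)) (1/a), f a x ∂p)
        + (∫ x in Set.Ioi (1/a), f a x ∂p) = ∫ x in Set.Ioi (-(1/a)), f a x ∂p := by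
      rw [← setIntegral_union (Set.Ioc_disjoint_Ioi le_rfl) measurableSet_Ioi
        ((hInt a).integrableOn) ((hInt a).integrableOn),
        Set.Ioc_union_Ioi_eq_Ioi (by linarith)]
    have e1 : (∫ x in Set.Iic (-(1/a)), f a x ∂p) = ∫ x in Set.Iic (-(1/a)), (-x) ∂p := by
      refine setIntegral_congr_fun measurableSet_Iic fun x hx => ?_
      have hx' : x ≤ -(1/a) := hx
      have hax : a * x ≤ -1 := by
        have := mul_le_mul_of_nonneg_left hx' ha.le
        rw [mul_neg] at this
        have : a * x ≤ -(a * (1/a)) := this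
        rw [mul_one_div, div_self ha.ne'] at this
        exact this
      simp only [hf]
      rw [max_eq_left hax, min_eq_right (by norm_num : (-1:ℝ) ≤ 1)]
      ring
    have e2 : (∫ x in Set.Ioc (-(1/a)) (1/a), f a x ∂p)
        = ∫ x in Set.Ioc (-(1/a)) (1/a), a * x ^ 2 ∂p := by
      refine setIntegral_congr_fun measurableSet_Ioc fun x hx => ?_
      obtain ⟨hx1, hx2⟩ := hx
      have h1 : -1 ≤ a * x := by
        rw [neg_lt] at hx1
        have := mul_le_mul_of_nonneg_left hx1.le ha.le
        rw [mul_one_div, div_self ha.ne'] at this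
        nlinarith
      have h2 : a * x ≤ 1 := by
        have := mul_le_mul_of_nonneg_left hx2 ha.le
        rw [mul_one_div, div_self ha.ne'] at this
        exact this
      simp only [hf]
      rw [max_eq_right h1, min_eq_right h2]
      ring
    have e3 : (∫ x in Set.Ioi (1/a), f a x ∂p) = ∫ x in Set.Ioi (1/a), x ∂p := by
      refine setIntegral_congr_fun measurableSet_Ioi fun x hx => ?_
      have hx' : 1/a < x := hx
      have h1 : 1 ≤ a * x := by
        have := mul_le_mul_of_nonneg_left hx'.le ha.le
        rw [mul_one_div, div_self ha.ne'] at this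
        exact this
      simp only [hf]
      rw [max_eq_right (by linarith), min_eq_left h1, mul_one]
    rw [hg a, ← hsplit1, ← hsplit2, e1, e2, e3, integral_Icc_eq_integral_Ioc,
      integral_Ici_eq_integral_Ioi, integral_const_mul]
    ring
  have hshift : ∀ a : ℝ, (∫ x, x * (1 + min 1 (max (-1) (a * x))) ∂p) - (∫ x, x ∂p)
      = ∫ x, f a x ∂p := by
    intro a
    have : (fun x => x * (1 + min 1 (max (-1) (a * x)))) = fun x => x + f a x := by
      funext x; simp only [hf]; ring
    rw [this, integral_add hint (hInt a)]
    ring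
  refine ⟨fun a ha => ⟨?_, ?_⟩, ?_, ?_⟩
  · rw [hshift a, key a ha]
  · rw [← key a ha]
    exact integral_nonneg fun x => hpos a x ha
  · have hcf : Continuous fun a => ∫ x, f a x ∂p := by
      refine continuous_of_dominated hmeas
        (fun a => Filter.Eventually.of_forall fun x => by
          simpa [Real.norm_eq_abs] using hbd a x) hint.abs
        (Filter.Eventually.of_forall fun x => ?_)
      exact continuous_const.mul (continuous_const.min (continuous_const.max
        (continuous_id.mul continuous_const)))
    exact hcf.continuousOn.congr fun a ha => (key a ha).symm
  · intro a ha b hb hab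
    rw [← key a ha, ← key b hb]
    exact integral_mono (hInt a) (hInt b) fun x => hmono a b x hab
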